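/- The Differential Pricing Mechanism is a 1/2-approximation: OPT ≤ 2·MLW(x), where x is the mechanism's allocation. Specifically, OPT ≤ Σ_{i=1}^k (B_i + v_i·Γ_i) + v_{k+1}·Σ_{i=k+1}^n Γ_i, and MLW(x) ≥ max{Σ_{i=1}^k (B_i + v_i·Γ_i), v_{k+1}·Σ_{i=k+1}^n Γ_i}. -/

import Mathlib

open Finset

set_option maxHeartbeats 1600000 in
/-- The Differential Pricing Mechanism is a `1/2`-approximation:
`OPT ≤ 2·MLW(x)`; more precisely
`OPT ≤ ∑_{i≤k}(B_i + v_iΓ_i) + v_{k+1}·∑_{i≥k+1}Γ_i` and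
`MLW(x) ≥ max{∑_{i≤k}(B_i + v_iΓ_i), v_{k+1}·∑_{i≥k+1}Γ_i}`. -/
theorem stmt_13 (n k : ℕ) (v B Γ : ℕ → ℝ)
    (hv : ∀ i ∈ Icc 1 n, 0 < v i)
    (hsort : ∀ i ∈ Icc 1 n, ∀ j ∈ Icc 1 n, i ≤ j → v j ≤ v i)
    (hB : ∀ i ∈ Icc 1 n, 0 ≤ B i) (hΓ : ∀ i ∈ Icc 1 n, 0 ≤ Γ i)
    (hk1 : 1 ≤ k) (hkn : k + 1 ≤ n)
    (hkle : ∑ i ∈ Icc 1 k, B i ≤ v k * ∑ i ∈ Icc (k+1) n, Γ i)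
    (hkmax : ∀ l, 1 ≤ l → l ≤ n →
      (∑ i ∈ Icc 1 l, B i ≤ v l * ∑ i ∈ Icc (l+1) n, Γ i) → l ≤ k)
    (q : ℝ)
    (hq : q = if v (k+1) * ∑ i ∈ Icc (k+1) n, Γ i < ∑ i ∈ Icc 1 k, B i
      then (∑ i ∈ Icc 1 k, B i) / ∑ i ∈ Icc (k+1) n, Γ i else v (k+1))
    (x : ℕ → ℝ)
    (hx1 : ∀ i, 1 ≤ i → i ≤ k → x i = B i / q)
    (hx2 : x (k+1) = ∑ i ∈ Icc (k+2) n, Γ i - ∑ i ∈ Icc 1 k, B i / q)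
    (hx3 : ∀ i, k+2 ≤ i → i ≤ n → x i = -Γ i)
    (OPT : ℝ)
    (hOPT : IsGreatest {w : ℝ | ∃ y : ℕ → ℝ,
      (∑ i ∈ Icc 1 n, y i = 0) ∧ (∀ i ∈ Icc 1 n, -Γ i ≤ y i) ∧
      w = ∑ i ∈ Icc 1 n, (v i * Γ i + min (v i * y i) (B i))} OPT) :
    OPT ≤ 2 * ∑ i ∈ Icc 1 n, (v i * Γ i + min (v i * x i) (B i)) ∧
    OPT ≤ ∑ i ∈ Icc 1 k, (B i + v i * Γ i) + v (k+1) * ∑ i ∈ Icc (k+1) n, Γ i ∧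
    max (∑ i ∈ Icc 1 k, (B i + v i * Γ i)) (v (k+1) * ∑ i ∈ Icc (k+1) n, Γ i)
      ≤ ∑ i ∈ Icc 1 n, (v i * Γ i + min (v i * x i) (B i)) := by
  
  -- abbreviations
  obtain ⟨hopt_mem, -⟩ := hOPT
  obtain ⟨y, hy0, hy1, hyw⟩ := hopt_mem
  have hvpos : ∀ i, 1 ≤ i → i ≤ n → 0 < v i := fun i h1 h2 => hv i (mem_Icc.2 ⟨h1, h2⟩)
  have hmono : ∀ i j, 1 ≤ i → i ≤ j → j ≤ n → v j ≤ v i := fun i j h1 h2 h3 =>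
    hsort i (mem_Icc.2 ⟨h1, h2.trans h3⟩) j (mem_Icc.2 ⟨h1.trans h2, h3⟩) h2
  have hB' : ∀ i, 1 ≤ i → i ≤ n → 0 ≤ B i := fun i h1 h2 => hB i (mem_Icc.2 ⟨h1, h2⟩)
  have hΓ' : ∀ i, 1 ≤ i → i ≤ n → 0 ≤ Γ i := fun i h1 h2 => hΓ i (mem_Icc.2 ⟨h1, h2⟩)
  set SB := ∑ i ∈ Icc 1 k, B i with hSBdef
  set T := ∑ i ∈ Icc (k+1) n, Γ i with hTdef
  set A := ∑ i ∈ Icc 1 k, (B i + v i * Γ i) with hAdef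
  have hvk1 : 0 < v (k+1) := hvpos _ (by omega) hkn
  have hvk : 0 < v k := hvpos _ hk1 (by omega)
  have hvkk1 : v (k+1) ≤ v k := hmono k (k+1) hk1 (by omega) hkn
  have hT0 : 0 ≤ T := Finset.sum_nonneg fun i hi =>
    hΓ' i (by have := (mem_Icc.1 hi).1; omega) (mem_Icc.1 hi).2
  have hSB0 : 0 ≤ SB := Finset.sum_nonneg fun i hi => hB' i (mem_Icc.1 hi).1 (by
    have := (mem_Icc.1 hi).2; omega)
  clear_value SB T A
  -- splitting lemmas
  have hsplit1 : ∀ f : ℕ → ℝ, ∑ i ∈ Icc 1 n, f i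
      = (∑ i ∈ Icc 1 k, f i) + ∑ i ∈ Icc (k+1) n, f i := by
    intro f
    rw [show Icc 1 n = Ioc 0 n from (Finset.Icc_add_one_left_eq_Ioc 0 n),
      show Icc 1 k = Ioc 0 k from (Finset.Icc_add_one_left_eq_Ioc 0 k),
      show Icc (k+1) n = Ioc k n from (Finset.Icc_add_one_left_eq_Ioc k n),
      Finset.sum_Ioc_consecutive f (Nat.zero_le k) (by omega)]
  have hsplit2 : ∀ f : ℕ → ℝ, ∑ i ∈ Icc (k+1) n, f i
      = f (k+1) + ∑ i ∈ Icc (k+2) n, f i := by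
    intro f
    have hins : Icc (k+1) n = insert (k+1) (Icc (k+2) n) := by
      ext j; simp only [mem_Icc, mem_insert]; omega
    rw [hins, Finset.sum_insert (by simp [mem_Icc])]
  -- q facts
  have hqfacts : 0 < q ∧ v (k+1) ≤ q ∧ q ≤ v k ∧ SB / q ≤ T := by
    by_cases hc : v (k+1) * T < SB
    · rw [if_pos hc] at hq
      have hTpos : 0 < T := by
        rcases eq_or_lt_of_le hT0 with h | h
        · exfalso; nlinarith
        · exact h
      have hSBpos : 0 < SB := by nlinarith
      have hqpos : 0 < q := hq ▸ div_pos hSBpos hTpos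
      refine ⟨hqpos, ?_, ?_, ?_⟩
      · rw [hq]; exact le_of_lt ((lt_div_iff₀ hTpos).2 (by linarith))
      · rw [hq]; exact (div_le_iff₀ hTpos).2 hkle
      · have heq : SB / (SB / T) = T := by
          rw [div_div_eq_mul_div, mul_comm, mul_div_assoc, div_self (ne_of_gt hSBpos), mul_one]
        rw [hq, heq]
    · rw [if_neg hc] at hq
      push_neg at hc
      refine ⟨hq ▸ hvk1, le_of_eq hq.symm, hq ▸ hvkk1, ?_⟩
      rw [hq, div_le_iff₀ hvk1]
      linarith
  obtain ⟨hqpos, hqge, hqle, hSq⟩ := hqfacts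
  clear hq
  -- value of mechanism on agents 1..k
  have hsum1 : ∑ i ∈ Icc 1 k, (v i * Γ i + min (v i * x i) (B i)) = A := by
    rw [hAdef]
    refine Finset.sum_congr rfl fun i hi => ?_
    obtain ⟨hi1, hi2⟩ := mem_Icc.1 hi
    rw [hx1 i hi1 hi2]
    have hqvi : q ≤ v i := hqle.trans (hmono i k hi1 hi2 (by omega))
    have hBi : 0 ≤ B i := hB' i hi1 (by omega)
    have : B i ≤ v i * (B i / q) := by
      have h1 : q * (B i / q) = B i := mul_div_cancel₀ (B i) (ne_of_gt hqpos)
      nlinarith [div_nonneg hBi hqpos.le, mul_le_mul_of_nonneg_right hqvi (div_nonneg hBi hqpos.le)]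
    rw [min_eq_right this]; ring
  -- value on agents k+2..n
  have hsum3 : ∑ i ∈ Icc (k+2) n, (v i * Γ i + min (v i * x i) (B i)) = 0 := by
    refine Finset.sum_eq_zero fun i hi => ?_
    obtain ⟨hi1, hi2⟩ := mem_Icc.1 hi
    rw [hx3 i hi1 hi2]
    have h1 : v i * (-Γ i) ≤ B i := by
      have := hvpos i (by omega) hi2
      have := hΓ' i (by omega) hi2
      have := hB' i (by omega) hi2
      nlinarith
    rw [min_eq_left h1]; ring
  -- total mechanism value
  have hM : ∑ i ∈ Icc 1 n, (v i * Γ i + min (v i * x i) (B i))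
      = A + (v (k+1) * Γ (k+1) + min (v (k+1) * x (k+1)) (B (k+1))) := by
    rw [hsplit1, hsum1, hsplit2 (fun i => v i * Γ i + min (v i * x i) (B i)), hsum3]
    ring
  -- x(k+1) in closed form
  have hx2' : x (k+1) = (T - Γ (k+1)) - SB / q := by
    have hTsplit : T = Γ (k+1) + ∑ i ∈ Icc (k+2) n, Γ i := by
      rw [hTdef]; exact hsplit2 Γ
    rw [hx2, ← Finset.sum_div, ← hSBdef, hTsplit]
    ring
  -- M ≥ A
  have hMgeA : A ≤ ∑ i ∈ Icc 1 n, (v i * Γ i + min (v i * x i) (B i)) := by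
    rw [hM]
    have hΓk1 : 0 ≤ Γ (k+1) := hΓ' _ (by omega) hkn
    have hBk1 : 0 ≤ B (k+1) := hB' _ (by omega) hkn
    have hxk1 : -Γ (k+1) ≤ x (k+1) := by rw [hx2']; linarith
    have : -(v (k+1) * Γ (k+1)) ≤ min (v (k+1) * x (k+1)) (B (k+1)) := by
      refine le_min ?_ (by nlinarith)
      nlinarith
    linarith
  -- M ≥ v(k+1) * T
  have hstrict : v (k+1) * (∑ i ∈ Icc (k+2) n, Γ i) < SB + B (k+1) := by
    by_contra h
    push_neg at h
    have h2 : ∑ i ∈ Icc 1 (k+1), B i ≤ v (k+1) * ∑ i ∈ Icc (k+1+1) n, Γ i := by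
      rw [Finset.sum_Icc_succ_top (by omega : 1 ≤ k+1) B, ← hSBdef]
      exact h
    have := hkmax (k+1) (by omega) hkn h2
    omega
  have hMgeC : v (k+1) * T ≤ ∑ i ∈ Icc 1 n, (v i * Γ i + min (v i * x i) (B i)) := by
    rw [hM]
    have hSBA : SB ≤ A := by
      rw [hAdef, hSBdef]
      refine Finset.sum_le_sum fun i hi => ?_
      obtain ⟨hi1, hi2⟩ := mem_Icc.1 hi
      nlinarith [hvpos i hi1 (by omega), hΓ' i hi1 (by omega)]
    have hmin_lb : v (k+1) * T - v (k+1) * Γ (k+1) - SB ≤ min (v (k+1) * x (k+1)) (B (k+1)) := by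
      refine le_min ?_ ?_
      · rw [hx2']
        have h1 : v (k+1) * (SB / q) ≤ q * (SB / q) :=
          mul_le_mul_of_nonneg_right hqge (div_nonneg hSB0 hqpos.le)
        have h2 : q * (SB / q) = SB := mul_div_cancel₀ SB (ne_of_gt hqpos)
        have h3 : v (k+1) * ((T - Γ (k+1)) - SB / q)
            = v (k+1) * T - v (k+1) * Γ (k+1) - v (k+1) * (SB / q) := by ring
        linarith
      · have hTsplit : T = Γ (k+1) + ∑ i ∈ Icc (k+2) n, Γ i := by
          rw [hTdef]; exact hsplit2 Γ
        have h4 : v (k+1) * T = v (k+1) * Γ (k+1) + v (k+1) * ∑ i ∈ Icc (k+2) n, Γ i := by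
          rw [hTsplit]; ring
        linarith
    linarith
  -- OPT upper bound
  have hOPTub : OPT ≤ A + v (k+1) * T := by
    rw [hyw]
    have hb1 : ∑ i ∈ Icc 1 k, (v i * Γ i + min (v i * y i) (B i))
        ≤ ∑ i ∈ Icc 1 k, (v i * Γ i + B i + v (k+1) * min (y i) 0) := by
      refine Finset.sum_le_sum fun i hi => ?_
      obtain ⟨hi1, hi2⟩ := mem_Icc.1 hi
      have hBi : 0 ≤ B i := hB' i hi1 (by omega)
      have hv1i : v (k+1) ≤ v i := hmono i (k+1) hi1 (by omega) hkn
      rcases le_or_gt 0 (y i) with h | h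
      · rw [min_eq_right h]
        have := min_le_right (v i * y i) (B i)
        linarith
      · rw [min_eq_left h.le]
        have h2 : v i * y i ≤ v (k+1) * y i := mul_le_mul_of_nonpos_right hv1i h.le
        have h3 := min_le_left (v i * y i) (B i)
        linarith
    have hb2 : ∑ i ∈ Icc (k+1) n, (v i * Γ i + min (v i * y i) (B i))
        ≤ ∑ i ∈ Icc (k+1) n, v (k+1) * (Γ i + y i) := by
      refine Finset.sum_le_sum fun i hi => ?_
      obtain ⟨hi1, hi2⟩ := mem_Icc.1 hi
      have h1 : v i ≤ v (k+1) := hmono (k+1) i (by omega) hi1 hi2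
      have h2 : 0 ≤ Γ i + y i := by
        have := hy1 i (mem_Icc.2 ⟨by omega, hi2⟩); linarith
      have h3 : v i * (Γ i + y i) ≤ v (k+1) * (Γ i + y i) :=
        mul_le_mul_of_nonneg_right h1 h2
      have h4 := min_le_left (v i * y i) (B i)
      have h5 : v i * (Γ i + y i) = v i * Γ i + v i * y i := by ring
      linarith
    have e1 : ∑ i ∈ Icc 1 k, (v i * Γ i + B i + v (k+1) * min (y i) 0)
        = A + v (k+1) * ∑ i ∈ Icc 1 k, min (y i) 0 := by
      rw [Finset.sum_add_distrib, Finset.mul_sum, hAdef]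
      congr 1
      exact Finset.sum_congr rfl fun i _ => by ring
    have e2 : ∑ i ∈ Icc (k+1) n, v (k+1) * (Γ i + y i)
        = v (k+1) * T + v (k+1) * ∑ i ∈ Icc (k+1) n, y i := by
      rw [← Finset.mul_sum, hTdef, ← mul_add, ← Finset.sum_add_distrib]
    have key : ∑ i ∈ Icc 1 k, min (y i) 0 + ∑ i ∈ Icc (k+1) n, y i ≤ 0 := by
      have h1 : ∑ i ∈ Icc 1 k, min (y i) 0 ≤ ∑ i ∈ Icc 1 k, y i :=
        Finset.sum_le_sum fun i _ => min_le_left (y i) 0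
      have h2 : (∑ i ∈ Icc 1 k, y i) + ∑ i ∈ Icc (k+1) n, y i = 0 := by
        rw [← hsplit1 y]; exact hy0
      linarith
    have key2 : v (k+1) * (∑ i ∈ Icc 1 k, min (y i) 0 + ∑ i ∈ Icc (k+1) n, y i) ≤ 0 :=
      mul_nonpos_of_nonneg_of_nonpos hvk1.le key
    calc ∑ i ∈ Icc 1 n, (v i * Γ i + min (v i * y i) (B i))
        = (∑ i ∈ Icc 1 k, (v i * Γ i + min (v i * y i) (B i)))
          + ∑ i ∈ Icc (k+1) n, (v i * Γ i + min (v i * y i) (B i)) :=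
          hsplit1 (fun i => v i * Γ i + min (v i * y i) (B i))
      _ ≤ (∑ i ∈ Icc 1 k, (v i * Γ i + B i + v (k+1) * min (y i) 0))
          + ∑ i ∈ Icc (k+1) n, v (k+1) * (Γ i + y i) := add_le_add hb1 hb2
      _ = A + v (k+1) * T
          + v (k+1) * (∑ i ∈ Icc 1 k, min (y i) 0 + ∑ i ∈ Icc (k+1) n, y i) := by
          rw [e1, e2]; ring
      _ ≤ A + v (k+1) * T := by linarith
  exact ⟨by linarith [hMgeA, hMgeC], hOPTub, max_le hMgeA hMgeC⟩
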